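/- Let $n = -p^k$ for a prime $p$ and $k \geq 1$, write $4n + 1 = c^2 d$ with $d$ square-free and $c > 0$, and let $\omega = (1+\sqrt{d})/2$ and $\xi = (1+c\sqrt{d})/2$. Suppose $z = a + b\omega \in \mathbb{Z}[\omega]$ satisfies $N(z) = z\bar{z} = p^i$ for some $0 \leq i < k$, and $p^\ell z \in \mathbb{Z}[\xi]$ for some $\ell \geq 0$. Then $i$ is even and $z = \pm p^{i/2}$. -/

import Mathlib

/-- The ring of integers `ℤ[ω]`, `ω = (1+√d)/2`, realized as `ℤ[X]/(X² - X - (d-1)/4)`. -/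
abbrev R9 (d : ℤ) :=
  AdjoinRoot ((Polynomial.X : Polynomial ℤ) ^ 2 - Polynomial.X - Polynomial.C ((d - 1) / 4))

/-- `ω = (1+√d)/2`. -/
noncomputable abbrev omega9 (d : ℤ) : R9 d := AdjoinRoot.root _

/-- `ξ = (1 + c√d)/2 = cω - (c-1)/2` in `ℤ[ω]`. -/
noncomputable abbrev xi9 (c d : ℤ) : R9 d :=
  (c : R9 d) * omega9 d - (((c - 1) / 2 : ℤ) : R9 d)

open Polynomial in
lemma R9.indep {d : ℤ} (u v : ℤ)
    (h : (u : R9 d) + (v : R9 d) * omega9 d = 0) : u = 0 ∧ v = 0 := by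
  set e := (d - 1) / 4 with he
  have h0 : AdjoinRoot.mk ((X:ℤ[X])^2 - X - C e) (C u + C v * X) = 0 := by
    rw [map_add, map_mul, AdjoinRoot.mk_C, AdjoinRoot.mk_C, AdjoinRoot.mk_X]
    simpa using h
  rw [AdjoinRoot.mk_eq_zero] at h0
  have hpolz : (C u + C v * X : ℤ[X]) = 0 := by
    by_contra hne
    have hd2 : ((X:ℤ[X])^2 - X - C e).degree = 2 := by compute_degree!
    have := Polynomial.degree_le_of_dvd h0 hne
    have hle : (C u + C v * X : ℤ[X]).degree ≤ 1 := by
      apply le_trans (Polynomial.degree_add_le _ _)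
      simp only [sup_le_iff]
      constructor
      · exact le_trans (Polynomial.degree_C_le) (by norm_num)
      · exact le_trans (Polynomial.degree_mul_le _ _)
          (le_trans (add_le_add Polynomial.degree_C_le Polynomial.degree_X_le) (by simp))
    rw [hd2] at this
    exact absurd (le_trans this hle) (by norm_num)
  constructor
  · have h0' := congrArg (fun q => Polynomial.coeff q 0) hpolz
    simp only [Polynomial.coeff_add, Polynomial.coeff_mul_X, Polynomial.coeff_C] at h0'
    simpa using h0'
  · have h1' := congrArg (fun q => Polynomial.coeff q 1) hpolz
    simp only [Polynomial.coeff_add, Polynomial.coeff_mul_X, Polynomial.coeff_C] at h1'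
    simpa using h1'

open Polynomial in
lemma R9.omega_sq (d : ℤ) :
    omega9 d ^ 2 = omega9 d + (((d - 1) / 4 : ℤ) : R9 d) := by
  have h := AdjoinRoot.eval₂_root ((X:ℤ[X])^2 - X - C ((d-1)/4))
  simp only [eval₂_sub, eval₂_pow, eval₂_X, eval₂_C, sub_eq_zero] at h
  have hC : AdjoinRoot.of ((X:ℤ[X])^2 - X - C ((d-1)/4)) ((d-1)/4) =
      (((d - 1) / 4 : ℤ) : R9 d) := by simp
  rw [sub_eq_iff_eq_add] at h
  rw [h, hC]; ring

lemma R9.mem_closure {c d : ℤ} (z : R9 d)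
    (hz : z ∈ Subring.closure {xi9 c d}) :
    ∃ x y : ℤ, z = (x : R9 d) + ((c * y : ℤ) : R9 d) * omega9 d := by
  induction hz using Subring.closure_induction with
  | mem w hw =>
      rw [Set.mem_singleton_iff] at hw
      exact ⟨-((c-1)/2), 1, by rw [hw]; unfold xi9; push_cast; ring⟩
  | zero => exact ⟨0, 0, by push_cast; ring⟩
  | one => exact ⟨1, 0, by push_cast; ring⟩
  | add z₁ z₂ _ _ h1 h2 =>
      obtain ⟨x₁, y₁, rfl⟩ := h1
      obtain ⟨x₂, y₂, rfl⟩ := h2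
      exact ⟨x₁ + x₂, y₁ + y₂, by push_cast; ring⟩
  | neg z₁ _ h1 =>
      obtain ⟨x₁, y₁, rfl⟩ := h1
      exact ⟨-x₁, -y₁, by push_cast; ring⟩
  | mul z₁ z₂ _ _ h1 h2 =>
      obtain ⟨x₁, y₁, rfl⟩ := h1
      obtain ⟨x₂, y₂, rfl⟩ := h2
      refine ⟨x₁ * x₂ + c^2 * y₁ * y₂ * ((d-1)/4), x₁ * y₂ + x₂ * y₁ + c * y₁ * y₂, ?_⟩
      have hω := R9.omega_sq d
      push_cast
      linear_combination ((c:R9 d)^2 * y₁ * y₂) * hω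

set_option maxHeartbeats 1000000 in
/-- with `n = -pᵏ`, `4n+1 = c²d` (`d` square-free, `c > 0`), if
`z = a + bω ∈ ℤ[ω]` has norm `N(z) = a² + ab + b²(1-d)/4 = pⁱ` with `0 ≤ i < k`, and
`pˡ z ∈ ℤ[ξ]` for some `ℓ ≥ 0`, then `i` is even and `z = ± p^{i/2}`. -/
theorem stmt10 (p : ℕ) (hp : p.Prime) (k : ℕ) (hk : 1 ≤ k) (n c d : ℤ)
    (hn : n = -(p : ℤ) ^ k) (hcd : 4 * n + 1 = c ^ 2 * d) (hd : Squarefree d) (hc : 0 < c)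
    (a b : ℤ) (i : ℕ) (hi : i < k) (l : ℕ)
    (hnorm : a ^ 2 + a * b + b ^ 2 * ((1 - d) / 4) = (p : ℤ) ^ i)
    (hmem : ((p : R9 d)) ^ l * ((a : R9 d) + (b : R9 d) * omega9 d) ∈
      Subring.closure {xi9 c d}) :
    Even i ∧ (((a : R9 d) + (b : R9 d) * omega9 d) = (p : R9 d) ^ (i / 2) ∨
      ((a : R9 d) + (b : R9 d) * omega9 d) = -(p : R9 d) ^ (i / 2)) := by
  -- c is odd
  have hcodd : ∃ t : ℤ, c = 2 * t + 1 := by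
    rcases Int.even_or_odd c with ⟨t, rfl⟩ | ⟨t, rfl⟩
    · exfalso
      have : 4 * n + 1 = 4 * (t ^ 2 * d) := by linear_combination hcd
      omega
    · exact ⟨t, rfl⟩
  obtain ⟨t, rfl⟩ := hcodd
  set c := 2 * t + 1 with hcdef
  have he4 : d - 1 = 4 * (n - (t ^ 2 + t) * d) := by linear_combination -hcd
  set e := n - (t ^ 2 + t) * d with hedef
  have h1d : (1 - d) / 4 = -e := by omega
  have hd1 : d = 4 * e + 1 := by omega
  have hct : (c - 1) / 2 = t := by omega
  rw [h1d] at hnorm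
  -- p does not divide c
  have hp2 : (2:ℤ) ≤ (p:ℤ) := by exact_mod_cast hp.two_le
  have hpprime : Prime (p:ℤ) := Nat.prime_iff_prime_int.1 hp
  have hpc : ¬ (p:ℤ) ∣ c := by
    intro hdvd
    have h1 : (p:ℤ) ∣ 1 := by
      have hpk : (p:ℤ) ∣ 4 * (p:ℤ) ^ k := Dvd.dvd.mul_left (dvd_pow_self _ (by omega)) 4
      have hc2 : (p:ℤ) ∣ c ^ 2 * d := Dvd.dvd.mul_right (dvd_pow hdvd two_ne_zero) d
      have : (1:ℤ) = c ^ 2 * d + 4 * (p:ℤ) ^ k := by rw [← hcd, hn]; ring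
      rw [this]; exact dvd_add hc2 hpk
    have := Int.le_of_dvd one_pos h1
    omega
  -- extract x, y from membership
  obtain ⟨x, y, hxy⟩ := R9.mem_closure _ hmem
  have h0 : (((p:ℤ) ^ l * a - x : ℤ) : R9 d) +
      (((p:ℤ) ^ l * b - c * y : ℤ) : R9 d) * omega9 d = 0 := by
    push_cast at hxy ⊢
    linear_combination hxy
  obtain ⟨-, h2⟩ := R9.indep _ _ h0
  have hcb : c ∣ b := by
    have hcop : IsCoprime c ((p:ℤ) ^ l) :=
      ((hpprime.coprime_iff_not_dvd.2 hpc).symm).pow_right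
    exact hcop.dvd_of_dvd_mul_left ⟨y, by linarith⟩
  obtain ⟨b', rfl⟩ := hcb
  -- key equation
  have key : (2 * a + c * b') ^ 2 + b' ^ 2 * (4 * (p:ℤ) ^ k - 1) = 4 * (p:ℤ) ^ i := by
    linear_combination 4 * hnorm - b' ^ 2 * hcd + 4 * b' ^ 2 * hn - b' ^ 2 * c ^ 2 * hd1
  have hb0 : b' = 0 := by
    by_contra hb
    have h1' : (0:ℤ) < b' ^ 2 := by positivity
    have h1 : (1:ℤ) ≤ b' ^ 2 := h1'
    have hpk1 : (p:ℤ) ^ i ≤ (p:ℤ) ^ (k-1) := pow_le_pow_right₀ (by omega) (by omega)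
    have hpk2 : (p:ℤ) ^ k = (p:ℤ) * (p:ℤ) ^ (k-1) := by
      rw [← pow_succ']; congr 1; omega
    have hpos : (0:ℤ) < (p:ℤ) ^ (k-1) := by positivity
    have h3 : 8 * (p:ℤ) ^ (k-1) ≤ 4 * (p:ℤ) ^ k := by rw [hpk2]; nlinarith
    have h4 : (0:ℤ) ≤ 4 * (p:ℤ) ^ k - 1 := by linarith
    have h5 := mul_le_mul_of_nonneg_right h1 h4
    nlinarith [sq_nonneg (2 * a + c * b')]
  subst hb0
  have ha2 : a ^ 2 = (p:ℤ) ^ i := by linarith [hnorm]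
  have hA : a.natAbs ^ 2 = p ^ i := by
    have := congrArg Int.natAbs ha2
    simpa [Int.natAbs_pow] using this
  obtain ⟨j, hj, hja⟩ := (Nat.dvd_prime_pow hp).1 ⟨a.natAbs, by rw [← hA]; ring⟩
  have hij : i = 2 * j := by
    have : p ^ (2 * j) = p ^ i := by rw [← hA, hja]; ring
    have := Nat.pow_right_injective hp.two_le this
    omega
  refine ⟨⟨j, by omega⟩, ?_⟩
  have hj2 : i / 2 = j := by omega
  have haN : (a : ℤ) = (p:ℤ) ^ j ∨ (a : ℤ) = -(p:ℤ) ^ j := by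
    rcases Int.natAbs_eq a with h | h
    · left; rw [h, hja]; push_cast; ring
    · right; rw [h, hja]; push_cast; ring
  rw [hj2, mul_zero, Int.cast_zero, zero_mul, add_zero]
  rcases haN with h | h
  · left; rw [h, Int.cast_pow, Int.cast_natCast]
  · right; rw [h, Int.cast_neg, Int.cast_pow, Int.cast_natCast]
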